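/- Let R be a unital associative ring and let A = [[a,b],[c,d]] be a 2×2 matrix over R such that a, b, c, d are invertible and A is invertible. Then the four elements a − bd⁻¹c, c − db⁻¹a, b − ac⁻¹d and d − ca⁻¹b are invertible in R, and A⁻¹ = [[(a − bd⁻¹c)⁻¹, (c − db⁻¹a)⁻¹], [(b − ac⁻¹d)⁻¹, (d − ca⁻¹b)⁻¹]]. -/

import Mathlib

open Matrix

section KontsevichDefs

variable {R : Type*} [Ring R]

/-- `J₂`: the transposed Hadamard inverse, `J₂(M)_{jk} = (M_{kj})⁻¹`
(with `Ring.inverse`, which is the two-sided inverse on units and `0` elsewhere). -/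
noncomputable def J2 {m : Type*} (M : Matrix m m R) : Matrix m m R :=
  Matrix.of fun j k => Ring.inverse (M k j)

variable {m : Type*} [Fintype m] [DecidableEq m]

/-- `J = J₂ ∘ J₁`, where `J₁(M) = M⁻¹` is the usual matrix inverse. -/
noncomputable def Jmap (M : Matrix m m R) : Matrix m m R := J2 (Ring.inverse M)

/-- `J⁻¹ = J₁ ∘ J₂`. -/
noncomputable def JinvMap (M : Matrix m m R) : Matrix m m R := Ring.inverse (J2 M)

/-- `dom(J)`: `M` invertible and all entries of `M⁻¹` invertible. -/
def domJ (M : Matrix m m R) : Prop :=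
  IsUnit M ∧ ∀ j k, IsUnit (Ring.inverse M j k)

/-- `dom(J⁻¹)`: all entries of `M` invertible and `J₂(M)` invertible. -/
def domJinv (M : Matrix m m R) : Prop :=
  (∀ j k, IsUnit (M j k)) ∧ IsUnit (J2 M)

/-- `dom(Jⁿ)` defined recursively: `M ∈ dom(Jⁿ⁺¹)` iff `M ∈ dom(J)` and `J(M) ∈ dom(Jⁿ)`. -/
def domJpow : ℕ → Matrix m m R → Prop
  | 0, _ => True
  | n + 1, M => domJ M ∧ domJpow n (Jmap M)

/-- `A ∼ B`: `B = D₁⁻¹ A D₂` for diagonal matrices `D₁, D₂` with invertible diagonal entries. -/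
def simRel (A B : Matrix m m R) : Prop :=
  ∃ d₁ d₂ : m → Rˣ,
    B = Matrix.diagonal (fun i => (((d₁ i)⁻¹ : Rˣ) : R)) * A *
        Matrix.diagonal (fun i => ((d₂ i : Rˣ) : R))

/-- entrywise conjugation `x⁻¹ A x` by an invertible ring element. -/
def conjEntry {m' : Type*} (x : Rˣ) (A : Matrix m' m' R) : Matrix m' m' R :=
  Matrix.of fun j k => ((x⁻¹ : Rˣ) : R) * A j k * (x : R)

/-- `M̂ₙ(R)`: first row and first column consist entirely of `1`'s. -/
def Mhat {m' : Type*} [Zero m'] (A : Matrix m' m' R) : Prop :=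
  ∀ k, A 0 k = 1 ∧ A k 0 = 1

/-- `Λ^L(A)_{jk} = a₁₁ a_{j1}⁻¹ a_{jk} a_{1k}⁻¹`. -/
noncomputable def LamL {m' : Type*} [Zero m'] (A : Matrix m' m' R) : Matrix m' m' R :=
  Matrix.of fun j k => A 0 0 * Ring.inverse (A j 0) * A j k * Ring.inverse (A 0 k)

/-- `Λ^R(A)_{jk} = a_{j1}⁻¹ a_{jk} a_{1k}⁻¹ a₁₁`. -/
noncomputable def LamR {m' : Type*} [Zero m'] (A : Matrix m' m' R) : Matrix m' m' R :=
  Matrix.of fun j k => Ring.inverse (A j 0) * A j k * Ring.inverse (A 0 k) * A 0 0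

/-- `Φ(A) = J₂(Λ^L(A⁻¹))`. -/
noncomputable def Phi [Zero m] (A : Matrix m m R) : Matrix m m R := J2 (LamL (Ring.inverse A))

/-- `dom(Φ)`: `A ∈ M̂ₙ(R)`, all entries of `A` invertible, `A` invertible,
all entries of `A⁻¹` invertible. -/
def domPhi [Zero m] (A : Matrix m m R) : Prop :=
  Mhat A ∧ (∀ j k, IsUnit (A j k)) ∧ IsUnit A ∧ ∀ j k, IsUnit (Ring.inverse A j k)

/-- `Φ⁻¹(B) = Λ^R(J⁻¹(B)) = Λ^R((J₂ B)⁻¹)`. -/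
noncomputable def PhiInv [Zero m] (B : Matrix m m R) : Matrix m m R := LamR (Ring.inverse (J2 B))

/-- `dom(Φ⁻¹)`: `B ∈ M̂ₙ(R)`, all entries of `B` invertible, `J₂(B)` invertible,
all entries of `J₂(B)⁻¹` invertible. -/
def domPhiInv [Zero m] (B : Matrix m m R) : Prop :=
  Mhat B ∧ (∀ j k, IsUnit (B j k)) ∧ IsUnit (J2 B) ∧ ∀ j k, IsUnit (Ring.inverse (J2 B) j k)

/-- `dom(Φⁿ)` defined recursively. -/
def domPhipow [Zero m] : ℕ → Matrix m m R → Prop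
  | 0, _ => True
  | n + 1, A => domPhi A ∧ domPhipow n (Phi A)

/-- `Ψ = J₂ ∘ Φ ∘ J₂`. -/
noncomputable def Psi [Zero m] (A : Matrix m m R) : Matrix m m R := J2 (Phi (J2 A))

/-- `dom(Ψ)`: `A ∈ M̂ₙ(R)`, all entries of `A` invertible, `J₂(A) ∈ dom(Φ)`. -/
def domPsi [Zero m] (A : Matrix m m R) : Prop :=
  Mhat A ∧ (∀ j k, IsUnit (A j k)) ∧ domPhi (J2 A)

/-- every square submatrix (equinumerous injective choices of rows and columns) is invertible. -/
def allSquareSubInv (M : Matrix (Fin 3) (Fin 3) R) : Prop :=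
  ∀ (k : ℕ) (r c : Fin k → Fin 3), Function.Injective r → Function.Injective c →
    IsUnit (M.submatrix r c)

/-- only the `1×1` and `2×2` submatrices are required to be invertible. -/
def sub12Inv (M : Matrix (Fin 3) (Fin 3) R) : Prop :=
  (∀ j k, IsUnit (M j k)) ∧
  ∀ (r c : Fin 2 → Fin 3), Function.Injective r → Function.Injective c →
    IsUnit (M.submatrix r c)

/-- `S`: all square submatrices of `M` are invertible and `J₂(M)` is invertible. -/
def Sset (R : Type*) [Ring R] : Set (Matrix (Fin 3) (Fin 3) R) :=
  {M | allSquareSubInv M ∧ IsUnit (J2 M)}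

/-- `Ŝ = S ∩ M̂₃(R)`. -/
def Shat (R : Type*) [Ring R] : Set (Matrix (Fin 3) (Fin 3) R) :=
  {M | M ∈ Sset R ∧ Mhat M}

end KontsevichDefs

/-- If `A = [[a,b],[c,d]]` has invertible entries and is invertible,
then `a − bd⁻¹c`, `c − db⁻¹a`, `b − ac⁻¹d`, `d − ca⁻¹b` are invertible and
`A⁻¹ = [[(a − bd⁻¹c)⁻¹, (c − db⁻¹a)⁻¹], [(b − ac⁻¹d)⁻¹, (d − ca⁻¹b)⁻¹]]`. -/
private lemma aux_schur {R : Type*} [Ring R] {a b c d p q r : R} (hd : IsUnit d)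
    (E1 : a * p + b * r = 1) (E3 : c * p + d * r = 0)
    (F1 : p * a + q * c = 1) (F2 : p * b + q * d = 0) :
    (a - b * Ring.inverse d * c) * p = 1 ∧ p * (a - b * Ring.inverse d * c) = 1 := by
  constructor
  · have hcp : c * p = -(d * r) := eq_neg_of_add_eq_zero_left E3
    have h1 : (a - b * Ring.inverse d * c) * p = a * p - b * (Ring.inverse d * (c * p)) := by
      noncomm_ring
    rw [h1, hcp, mul_neg, ← mul_assoc, Ring.inverse_mul_cancel d hd, one_mul, mul_neg,
      sub_neg_eq_add, E1]
  · have hpb : p * b = -(q * d) := eq_neg_of_add_eq_zero_left F2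
    have h1 : p * (a - b * Ring.inverse d * c) = p * a - (p * b) * (Ring.inverse d * c) := by
      noncomm_ring
    rw [h1, hpb, neg_mul, mul_assoc, ← mul_assoc d, Ring.mul_inverse_cancel d hd, one_mul,
      sub_neg_eq_add, F1]

private lemma aux_two_sided {R : Type*} [Ring R] {z w : R} (h1 : z * w = 1) (h2 : w * z = 1) :
    IsUnit z ∧ Ring.inverse z = w := by
  have hz : IsUnit z := ⟨⟨z, w, h1, h2⟩, rfl⟩
  refine ⟨hz, ?_⟩
  have := Ring.mul_inverse_cancel z hz
  calc Ring.inverse z = 1 * Ring.inverse z := (one_mul _).symm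
    _ = w * (z * Ring.inverse z) := by rw [← h2, mul_assoc]
    _ = w := by rw [this, mul_one]

theorem two_by_two_inverse_formula {R : Type*} [Ring R] (a b c d : R)
    (ha : IsUnit a) (hb : IsUnit b) (hc : IsUnit c) (hd : IsUnit d)
    (hA : IsUnit (!![a, b; c, d] : Matrix (Fin 2) (Fin 2) R)) :
    IsUnit (a - b * Ring.inverse d * c) ∧ IsUnit (c - d * Ring.inverse b * a) ∧
    IsUnit (b - a * Ring.inverse c * d) ∧ IsUnit (d - c * Ring.inverse a * b) ∧
    Ring.inverse (!![a, b; c, d] : Matrix (Fin 2) (Fin 2) R) =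
      !![Ring.inverse (a - b * Ring.inverse d * c), Ring.inverse (c - d * Ring.inverse b * a);
         Ring.inverse (b - a * Ring.inverse c * d), Ring.inverse (d - c * Ring.inverse a * b)] := by
  set A : Matrix (Fin 2) (Fin 2) R := !![a, b; c, d] with hAdef
  set B := Ring.inverse A with hBdef
  have hAB : A * B = 1 := Ring.mul_inverse_cancel A hA
  have hBA : B * A = 1 := Ring.inverse_mul_cancel A hA
  set p := B 0 0; set q := B 0 1; set r := B 1 0; set s := B 1 1
  have E1 : a * p + b * r = 1 := by
    have := congrFun (congrFun hAB 0) 0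
    simpa [hAdef, Matrix.mul_apply, Fin.sum_univ_two] using this
  have E2 : a * q + b * s = 0 := by
    have := congrFun (congrFun hAB 0) 1
    simpa [hAdef, Matrix.mul_apply, Fin.sum_univ_two] using this
  have E3 : c * p + d * r = 0 := by
    have := congrFun (congrFun hAB 1) 0
    simpa [hAdef, Matrix.mul_apply, Fin.sum_univ_two] using this
  have E4 : c * q + d * s = 1 := by
    have := congrFun (congrFun hAB 1) 1
    simpa [hAdef, Matrix.mul_apply, Fin.sum_univ_two] using this
  have F1 : p * a + q * c = 1 := by
    have := congrFun (congrFun hBA 0) 0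
    simpa [hAdef, Matrix.mul_apply, Fin.sum_univ_two] using this
  have F2 : p * b + q * d = 0 := by
    have := congrFun (congrFun hBA 0) 1
    simpa [hAdef, Matrix.mul_apply, Fin.sum_univ_two] using this
  have F3 : r * a + s * c = 0 := by
    have := congrFun (congrFun hBA 1) 0
    simpa [hAdef, Matrix.mul_apply, Fin.sum_univ_two] using this
  have F4 : r * b + s * d = 1 := by
    have := congrFun (congrFun hBA 1) 1
    simpa [hAdef, Matrix.mul_apply, Fin.sum_univ_two] using this
  -- p
  obtain ⟨hp1, hp2⟩ := aux_schur hd E1 E3 F1 F2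
  obtain ⟨hup, hip⟩ := aux_two_sided hp1 hp2
  -- q
  obtain ⟨hq1, hq2⟩ := aux_schur hb E4 E2 (by rw [add_comm]; exact F1) (by rw [add_comm]; exact F2)
  obtain ⟨huq, hiq⟩ := aux_two_sided hq1 hq2
  -- r
  obtain ⟨hr1, hr2⟩ := aux_schur hc (by rw [add_comm]; exact E1) (by rw [add_comm]; exact E3) F4 F3
  obtain ⟨hur, hir⟩ := aux_two_sided hr1 hr2
  -- s
  obtain ⟨hs1, hs2⟩ := aux_schur ha (by rw [add_comm]; exact E4) (by rw [add_comm]; exact E2)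
    (by rw [add_comm]; exact F4) (by rw [add_comm]; exact F3)
  obtain ⟨hus, his⟩ := aux_two_sided hs1 hs2
  refine ⟨hup, huq, hur, hus, ?_⟩
  ext i j
  fin_cases i <;> fin_cases j <;> simp [hip, hiq, hir, his] <;> rfl
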